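/- Fix constants y₄,y₆,y₈,y₁₀ ∈ ℂ. Let G₂,G₄,G₅,G₇ : ℝ → ℂ be functions such that for every τ ∈ ℝ: G₂'(τ) = G₂(τ)G₅(τ) − G₇(τ); G₄'(τ) = 2(G₂(τ)G₇(τ) − G₄(τ)G₅(τ)); G₅'(τ) = G₅(τ)² + 14G₂(τ)⁵ − 28G₂(τ)³G₄(τ) − 18G₂(τ)G₄(τ)² − 8y₄G₂(τ)G₄(τ) + 2y₆(G₂(τ)² + G₄(τ)) − 2y₈G₂(τ) + y₁₀; G₇'(τ) = −G₅(τ)G₇(τ) + 21G₂(τ)⁶ + 35G₂(τ)⁴G₄(τ) − 21G₂(τ)²G₄(τ)² − 3G₄(τ)³ + 2y₄(5G₂(τ)⁴ − G₄(τ)²) − 2y₆(3G₂(τ)³ − G₂(τ)G₄(τ)) + y₈(3G₂(τ)² − G₄(τ)) − y₁₀G₂(τ) (each equation meaning the function has the indicated derivative at τ). Then the functions τ ↦ I₁₂(G₂(τ),G₄(τ),G₅(τ),G₇(τ)) and τ ↦ I₁₄(G₂(τ),G₄(τ),G₅(τ),G₇(τ)) have derivative 0 at every τ ∈ ℝ.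 -/

import Mathlib

/- Context: the polynomial first integrals I₁₂ and I₁₄ of the dynamical systems (I)
and (II) on ℂ⁴ with constant parameters y₄, y₆, y₈, y₁₀. -/

def I12 (y4 y6 y8 y10 g2 g4 g5 g7 : ℂ) : ℂ :=
  2 * g5 * g7 - 7 * g2 ^ 6 - 35 * g2 ^ 4 * g4 - 21 * g2 ^ 2 * g4 ^ 2 - g4 ^ 3
    - y4 * (5 * g2 ^ 4 + 10 * g2 ^ 2 * g4 + g4 ^ 2) + 4 * y6 * (g2 ^ 3 + g2 * g4)
    - y8 * (3 * g2 ^ 2 + g4) + 2 * y10 * g2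

def I14 (y4 y6 y8 y10 g2 g4 g5 g7 : ℂ) : ℂ :=
  -g7 ^ 2 - g4 * g5 ^ 2 + 2 * g2 * g5 * g7 - 6 * g2 ^ 7 - 14 * g2 ^ 5 * g4
    + 14 * g2 ^ 3 * g4 ^ 2 + 6 * g2 * g4 ^ 3 - 4 * y4 * (g2 ^ 5 - g2 * g4 ^ 2)
    + y6 * (3 * g2 ^ 4 - 2 * g2 ^ 2 * g4 - g4 ^ 2) - 2 * y8 * (g2 ^ 3 - g2 * g4)
    + y10 * (g2 ^ 2 - g4)

lemma auxPow {f : ℝ → ℂ} {f' : ℂ} {x : ℝ} (h : HasDerivAt f f' x) (n : ℕ) :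
    HasDerivAt (fun s => f s ^ n) ((n : ℂ) * f x ^ (n - 1) * f') x := by
  exact (hasDerivAt_pow n (f x)).comp x h

set_option maxHeartbeats 1000000 in
/-- Along any solution of the dynamical system (II), the functions
`τ ↦ I₁₂(G₂,G₄,G₅,G₇)` and `τ ↦ I₁₄(G₂,G₄,G₅,G₇)` have derivative `0` everywhere. -/
theorem statement12 (y4 y6 y8 y10 : ℂ) (G2 G4 G5 G7 : ℝ → ℂ)
    (h2 : ∀ τ : ℝ, HasDerivAt G2 (G2 τ * G5 τ - G7 τ) τ)
    (h4 : ∀ τ : ℝ, HasDerivAt G4 (2 * (G2 τ * G7 τ - G4 τ * G5 τ)) τ)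
    (h5 : ∀ τ : ℝ, HasDerivAt G5
      ((G5 τ) ^ 2 + 14 * (G2 τ) ^ 5 - 28 * (G2 τ) ^ 3 * G4 τ - 18 * G2 τ * (G4 τ) ^ 2
        - 8 * y4 * G2 τ * G4 τ + 2 * y6 * ((G2 τ) ^ 2 + G4 τ)
        - 2 * y8 * G2 τ + y10) τ)
    (h7 : ∀ τ : ℝ, HasDerivAt G7
      (-(G5 τ) * G7 τ + 21 * (G2 τ) ^ 6 + 35 * (G2 τ) ^ 4 * G4 τ
        - 21 * (G2 τ) ^ 2 * (G4 τ) ^ 2 - 3 * (G4 τ) ^ 3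
        + 2 * y4 * (5 * (G2 τ) ^ 4 - (G4 τ) ^ 2)
        - 2 * y6 * (3 * (G2 τ) ^ 3 - G2 τ * G4 τ)
        + y8 * (3 * (G2 τ) ^ 2 - G4 τ) - y10 * G2 τ) τ) :
    ∀ τ : ℝ,
      HasDerivAt (fun s => I12 y4 y6 y8 y10 (G2 s) (G4 s) (G5 s) (G7 s)) 0 τ ∧
      HasDerivAt (fun s => I14 y4 y6 y8 y10 (G2 s) (G4 s) (G5 s) (G7 s)) 0 τ := by
  intro τ
  have A := h2 τ
  have B := h4 τ
  have C := h5 τ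
  have D := h7 τ
  constructor
  · have t1 := (C.const_mul (2:ℂ)).mul D
    have t2 := ((auxPow A 6)).const_mul (7:ℂ)
    have t3 := (((auxPow A 4)).const_mul (35:ℂ)).mul B
    have t4 := (((auxPow A 2)).const_mul (21:ℂ)).mul ((auxPow B 2))
    have t5 := (auxPow B 3)
    have t6 := (((((auxPow A 4)).const_mul (5:ℂ)).add ((((auxPow A 2)).const_mul (10:ℂ)).mul B)).add ((auxPow B 2))).const_mul y4
    have t7 := (((auxPow A 3)).add (A.mul B)).const_mul (4 * y6)
    have t8 := ((((auxPow A 2)).const_mul (3:ℂ)).add B).const_mul y8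
    have t9 := A.const_mul (2 * y10)
    have H := ((((((((t1.sub t2).sub t3).sub t4).sub t5).sub t6).add t7).sub t8).add t9)
    simp only [I12]
    convert H using 1
    · rfl
    · funext s; simp only [Pi.mul_apply, Pi.sub_apply, Pi.add_apply, Pi.neg_apply]
    · ring
  · have t1 := ((auxPow D 2)).neg
    have t2 := B.mul ((auxPow C 2))
    have t3 := ((A.const_mul (2:ℂ)).mul C).mul D
    have t4 := ((auxPow A 7)).const_mul (6:ℂ)
    have t5 := (((auxPow A 5)).const_mul (14:ℂ)).mul B
    have t6 := (((auxPow A 3)).const_mul (14:ℂ)).mul ((auxPow B 2))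
    have t7 := (A.const_mul (6:ℂ)).mul ((auxPow B 3))
    have t8 := (((auxPow A 5)).sub (A.mul ((auxPow B 2)))).const_mul (4 * y4)
    have t9 := (((((auxPow A 4)).const_mul (3:ℂ)).sub ((((auxPow A 2)).const_mul (2:ℂ)).mul B)).sub ((auxPow B 2))).const_mul y6
    have t10 := (((auxPow A 3)).sub (A.mul B)).const_mul (2 * y8)
    have t11 := (((auxPow A 2)).sub B).const_mul y10
    have H := ((((((((((t1.sub t2).add t3).sub t4).sub t5).add t6).add t7).sub t8).add t9).sub t10).add t11)
    simp only [I14]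
    convert H using 1
    · rfl
    · funext s; simp only [Pi.mul_apply, Pi.sub_apply, Pi.add_apply, Pi.neg_apply]
    simp only [Pi.mul_apply]; ring
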